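/- For d ≥ 2, ∫_{[0,1]^{d−1}} [1/(1 − c_1⋯c_{d−1})] dc = ζ(d−1) when d ≥ 3, where ζ is the Riemann zeta function; i.e., the integral of the geometric-series kernel 1/(1−|c|) over the unit cube of dimension d−1 ≥ 2 equals ∑_{n≥1} n^{−(d−1)}. -/

import Mathlib

open Real MeasureTheory

lemma one_dim_integral (n : ℕ) : ∫ x in Set.Icc (0:ℝ) 1, x ^ n = 1 / (n + 1) := by
  rw [MeasureTheory.integral_Icc_eq_integral_Ioc,
    ← intervalIntegral.integral_of_le (by norm_num : (0:ℝ) ≤ 1), integral_pow]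
  simp

lemma indicator_prod_pow {k n : ℕ} (x : Fin k → ℝ) :
    (Set.Icc (0 : Fin k → ℝ) 1).indicator (fun c => (∏ i, c i) ^ n) x
      = ∏ i, (Set.Icc (0:ℝ) 1).indicator (fun t => t ^ n) (x i) := by
  rw [← Set.pi_univ_Icc]
  simp only [Pi.zero_apply, Pi.one_apply]
  by_cases hx : x ∈ Set.pi Set.univ (fun _ : Fin k => Set.Icc (0:ℝ) 1)
  · rw [Set.indicator_of_mem hx, ← Finset.prod_pow]
    refine Finset.prod_congr rfl fun i _ => ?_
    rw [Set.indicator_of_mem (hx i (Set.mem_univ i))]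
  · rw [Set.indicator_of_notMem hx]
    obtain ⟨i, hi⟩ : ∃ i, x i ∉ Set.Icc (0:ℝ) 1 := by
      by_contra h
      push_neg at h
      exact hx fun i _ => h i
    exact (Finset.prod_eq_zero (Finset.mem_univ i)
      (by rw [Set.indicator_of_notMem hi])).symm

lemma cube_integral_pow (k n : ℕ) :
    ∫ c in Set.Icc (0 : Fin k → ℝ) 1, (∏ i, c i) ^ n = (1 / (n + 1 : ℝ)) ^ k := by
  rw [← MeasureTheory.integral_indicator measurableSet_Icc]
  simp_rw [indicator_prod_pow]
  rw [MeasureTheory.integral_fintype_prod_volume_eq_prod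
    (fun _ => (Set.Icc (0:ℝ) 1).indicator (fun t => t ^ n))]
  simp_rw [MeasureTheory.integral_indicator measurableSet_Icc, one_dim_integral]
  simp

theorem stmt9 (d : ℕ) (hd : 3 ≤ d) :
    ∫ c in Set.Icc (0 : Fin (d - 1) → ℝ) 1, 1 / (1 - ∏ i, c i)
      = ∑' n : ℕ, (1 : ℝ) / (n + 1) ^ (d - 1) := by
  set k := d - 1 with hk
  have hk2 : 2 ≤ k := by omega
  -- pointwise equality on the cube
  have hpt : ∀ c ∈ Set.Icc (0 : Fin k → ℝ) 1,
      1 / (1 - ∏ i, c i) = ∑' n : ℕ, (∏ i, c i) ^ n := by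
    intro c hc
    have h0 : 0 ≤ ∏ i, c i := Finset.prod_nonneg fun i _ => hc.1 i
    have h1 : ∏ i, c i ≤ 1 := Finset.prod_le_one (fun i _ => hc.1 i) (fun i _ => hc.2 i)
    rcases lt_or_eq_of_le h1 with h1 | h1
    · rw [tsum_geometric_of_lt_one h0 h1, one_div]
    · rw [h1]
      simp only [one_pow, sub_self]
      rw [tsum_eq_zero_of_not_summable (by
        intro h
        exact one_ne_zero (tendsto_nhds_unique tendsto_const_nhds h.tendsto_atTop_zero)), div_zero]
  rw [setIntegral_congr_fun measurableSet_Icc hpt]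
  -- swap sum and integral
  have hint : ∀ n : ℕ, IntegrableOn (fun c : Fin k → ℝ => (∏ i, c i) ^ n)
      (Set.Icc 0 1) := by
    intro n
    exact (Continuous.continuousOn (by continuity)).integrableOn_compact isCompact_Icc
  have hsum : Summable fun n : ℕ => (1 / (n + 1 : ℝ)) ^ k := by
    have : Summable fun n : ℕ => 1 / ((n : ℝ) ^ k) :=
      Real.summable_one_div_nat_pow.mpr hk2
    have := (summable_nat_add_iff 1).mpr this
    simpa [div_pow] using this
  have hnormint : ∀ n : ℕ, ∫ c in Set.Icc (0 : Fin k → ℝ) 1, ‖(∏ i, c i) ^ n‖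
      = (1 / (n + 1 : ℝ)) ^ k := by
    intro n
    rw [setIntegral_congr_fun measurableSet_Icc (g := fun c => (∏ i, c i) ^ n)
      (fun c hc => by
        show ‖_‖ = _
        rw [Real.norm_eq_abs, abs_of_nonneg
          (pow_nonneg (Finset.prod_nonneg fun i _ => hc.1 i) n)]),
      cube_integral_pow]
  rw [← MeasureTheory.integral_tsum_of_summable_integral_norm (fun n => hint n)
    (by simpa only [hnormint] using hsum)]
  refine tsum_congr fun n => ?_
  rw [cube_integral_pow, div_pow, one_pow]
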